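/- arXiv:0902.2818 — 10 statements merged into one kernel-verified Lean document; each statement's English description precedes it below -/
import Mathlib

section
/- A topology on a type X is self-dual (that is, the complement of every open set is open) if and only if there exists a topological basis B for this topology such that every member of B is nonempty, the members of B are pairwise disjoint, and the union of B is all of X (i.e., B is a partition of X). -/
/-- Satz 1.1: A topology is self-dual (complements of open sets are open)
iff it has a basis that is a partition of the space into nonempty pieces. -/
theorem selfdual_iff_partition_basis {X : Type*} [TopologicalSpace X] :
    (∀ U : Set X, IsOpen U → IsOpen Uᶜ) ↔
      ∃ B : Set (Set X), TopologicalSpace.IsTopologicalBasis B ∧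
        (∀ b ∈ B, b.Nonempty) ∧ B.Pairwise Disjoint ∧ ⋃₀ B = Set.univ := by
  constructor
  · intro h
    -- minimal open set containing x
    set K : X → Set X := fun x => ⋂₀ {V : Set X | IsOpen V ∧ x ∈ V} with hK
    have hmemK : ∀ x, x ∈ K x := by
      intro x
      exact fun V hV => hV.2
    have hKsub : ∀ x (V : Set X), IsOpen V → x ∈ V → K x ⊆ V := by
      intro x V hV hxV
      exact Set.sInter_subset_of_mem ⟨hV, hxV⟩
    have hKopen : ∀ x, IsOpen (K x) := by
      intro x
      -- K x is closed: its complement is a union of open sets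
      have hclosed : IsClosed (K x) := by
        have : IsOpen (K x)ᶜ := by
          rw [Set.compl_sInter]
          apply isOpen_sUnion
          rintro V ⟨W, ⟨hW, hxW⟩, rfl⟩
          exact h W hW
        exact isOpen_compl_iff.mp this
      have := h (K x)ᶜ hclosed.isOpen_compl
      simpa using this
    -- key: if z ∈ K x then K z = K x
    have hKeq : ∀ x z, z ∈ K x → K z = K x := by
      intro x z hz
      apply Set.Subset.antisymm
      · exact hKsub z (K x) (hKopen x) hz
      · apply hKsub x (K z) (hKopen z)
        -- x ∈ K z: every open V containing z contains x
        intro V ⟨hV, hzV⟩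
        by_contra hxV
        have : K x ⊆ Vᶜ := hKsub x Vᶜ (h V hV) hxV
        exact this hz hzV
    refine ⟨Set.range K, ?_, ?_, ?_, ?_⟩
    · apply TopologicalSpace.isTopologicalBasis_of_isOpen_of_nhds
      · rintro b ⟨x, rfl⟩; exact hKopen x
      · intro x U hxU hU
        exact ⟨K x, ⟨x, rfl⟩, hmemK x, hKsub x U hU hxU⟩
    · rintro b ⟨x, rfl⟩; exact ⟨x, hmemK x⟩
    · rintro b ⟨x, rfl⟩ c ⟨y, rfl⟩ hne
      rw [Set.disjoint_left]
      intro z hzx hzy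
      exact hne ((hKeq x z hzx).symm.trans (hKeq y z hzy))
    · apply Set.eq_univ_of_forall
      intro x
      exact ⟨K x, ⟨x, rfl⟩, hmemK x⟩
  · rintro ⟨B, hB, -, hdisj, hcov⟩ U hU
    rw [isOpen_iff_forall_mem_open]
    intro x hx
    have hxuniv : x ∈ ⋃₀ B := hcov ▸ Set.mem_univ x
    obtain ⟨b, hbB, hxb⟩ := hxuniv
    refine ⟨b, ?_, hB.isOpen hbB, hxb⟩
    intro y hyb
    intro hyU
    obtain ⟨b', hb'B, hyb', hb'U⟩ := hB.exists_subset_of_mem_open hyU hU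
    have : b = b' := by
      by_contra hne
      exact Set.disjoint_left.mp (hdisj hbB hb'B hne) hyb hyb'
    exact hx (hb'U (this ▸ hxb))
end

section
/- Let X carry a self-dual topology (the complement of every open set is open) and let U be a nonempty open set. Then the intersection of all open sets meeting U, namely ⋂₀ {W : Set X | IsOpen W ∧ (W ∩ U).Nonempty}, is either the empty set or equal to U. -/
/-- Key dichotomy in the proof of Satz 1.1: in a self-dual topology, the
intersection of all open sets meeting a nonempty open set U is ∅ or U. -/
theorem selfdual_selection_dichotomy {X : Type*} [TopologicalSpace X]
    (hsd : ∀ U : Set X, IsOpen U → IsOpen Uᶜ)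
    (U : Set X) (hU : IsOpen U) (hne : U.Nonempty) :
    ⋂₀ {W : Set X | IsOpen W ∧ (W ∩ U).Nonempty} = ∅ ∨
      ⋂₀ {W : Set X | IsOpen W ∧ (W ∩ U).Nonempty} = U := by
  by_cases h : (⋂₀ {W : Set X | IsOpen W ∧ (W ∩ U).Nonempty}).Nonempty
  · right
    obtain ⟨x, hx⟩ := h
    apply Set.Subset.antisymm
    · intro y hy
      exact hy U ⟨hU, by simpa [Set.inter_self] using hne⟩
    · intro u hu W hW
      by_contra huW
      have hWmem : x ∈ W := hx W hW
      have hWc : x ∈ Wᶜ := hx Wᶜ ⟨hsd W hW.1, ⟨u, huW, hu⟩⟩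
      exact hWc hWmem
  · left
    exact Set.not_nonempty_iff_eq_empty.mp h
end

section
/- Let Ξ be a set of permutations of a type Y, let G = Subgroup.closure Ξ, and let χ ⊆ Y be nonempty with ξ '' χ = χ for every ξ ∈ Ξ. Then χ equals the intersection ⋂₀ {U : Set Y | (∀ ξ ∈ Ξ, ξ '' U = U) ∧ (U ∩ χ).Nonempty} of all Ξ-invariant sets meeting χ if and only if for all nonempty subsets a, b ⊆ χ there exists g ∈ G such that (g '' a) ∩ b is nonempty. -/
/-- Lemma 1.3 (Indifferente Kohärenz): a nonempty Ξ-invariant set χ is an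
integere set of the common invariant topology iff any two nonempty subsets of χ
can be made to intersect by some element of the generated group. -/
theorem integere_iff_coherent {Y : Type*} (Ξ : Set (Equiv.Perm Y)) (χ : Set Y)
    (hne : χ.Nonempty) (hinv : ∀ ξ ∈ Ξ, ξ '' χ = χ) :
    χ = ⋂₀ {U : Set Y | (∀ ξ ∈ Ξ, ξ '' U = U) ∧ (U ∩ χ).Nonempty} ↔
      ∀ a b : Set Y, a ⊆ χ → b ⊆ χ → a.Nonempty → b.Nonempty →
        ∃ g ∈ Subgroup.closure Ξ, ((g : Equiv.Perm Y) '' a ∩ b).Nonempty := by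
  constructor
  · intro h a b ha hb hane hbne
    set G := Subgroup.closure Ξ with hG
    set U : Set Y := ⋃ g : G, (g : Equiv.Perm Y) '' a with hU
    have haU : a ⊆ U := fun x hx => Set.mem_iUnion.2 ⟨1, by simpa using hx⟩
    have hUinv : ∀ ξ ∈ Ξ, ξ '' U = U := by
      intro ξ hξ
      have hξG : ξ ∈ G := Subgroup.subset_closure hξ
      apply Set.Subset.antisymm
      · rintro _ ⟨x, hx, rfl⟩
        rcases Set.mem_iUnion.1 hx with ⟨g, y, hy, rfl⟩
        exact Set.mem_iUnion.2 ⟨⟨ξ, hξG⟩ * g, y, hy, by simp⟩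
      · rintro x hx
        rcases Set.mem_iUnion.1 hx with ⟨g, y, hy, rfl⟩
        refine ⟨((⟨ξ, hξG⟩⁻¹ * g : G) : Equiv.Perm Y) y,
          Set.mem_iUnion.2 ⟨_, y, hy, rfl⟩, ?_⟩
        simp
    have hUχ : (U ∩ χ).Nonempty := hane.imp fun x hx => ⟨haU hx, ha hx⟩
    have hχU : χ ⊆ U := by
      rw [h]; exact Set.sInter_subset_of_mem ⟨hUinv, hUχ⟩
    obtain ⟨y, hyb⟩ := hbne
    rcases Set.mem_iUnion.1 (hχU (hb hyb)) with ⟨g, x, hx, hgx⟩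
    exact ⟨g, g.2, y, ⟨x, hx, hgx⟩, hyb⟩
  · intro h
    apply Set.Subset.antisymm
    · intro y hy U hUmem
      obtain ⟨hUinv, hUχ⟩ := hUmem
      have hGinv : ∀ g ∈ Subgroup.closure Ξ, (g : Equiv.Perm Y) '' U = U := by
        intro g hg
        induction hg using Subgroup.closure_induction with
        | mem ξ hξ => exact hUinv ξ hξ
        | one => simp
        | mul g k _ _ hgU hkU =>
            rw [show ⇑(g * k) = ⇑g ∘ ⇑k from rfl, Set.image_comp, hkU, hgU]
        | inv g _ hgU =>
            conv_lhs => rw [← hgU]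
            rw [← Set.image_comp]
            simp
      obtain ⟨g, hg, z, ⟨x, ⟨hxU, _⟩, hgx⟩, hz⟩ :=
        h (U ∩ χ) {y} Set.inter_subset_right (by simpa using hy) hUχ ⟨y, rfl⟩
      have : z ∈ (g : Equiv.Perm Y) '' U := ⟨x, hxU, hgx⟩
      rw [hGinv g hg] at this
      rwa [Set.mem_singleton_iff.1 hz] at this
    · exact Set.sInter_subset_of_mem ⟨hinv, hne.imp fun x hx => ⟨hx, hx⟩⟩
end

section
/- Let Ξ be a set of permutations of a type Y, let G = Subgroup.closure Ξ, and let χ ⊆ Y be nonempty. Then χ equals the intersection ⋂₀ {U : Set Y | (∀ ξ ∈ Ξ, ξ '' U = U) ∧ (U ∩ χ).Nonempty} of all Ξ-invariant sets meeting χ if and only if χ is a G-orbit, i.e., there exists x ∈ Y with χ = MulAction.orbit G x. -/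
private lemma closure_image_eq {Y : Type*} {Ξ : Set (Equiv.Perm Y)} {U : Set Y}
    (hU : ∀ ξ ∈ Ξ, ξ '' U = U) :
    ∀ g ∈ Subgroup.closure Ξ, (g : Equiv.Perm Y) '' U = U := by
  intro g hg
  refine Subgroup.closure_induction hU ?_ ?_ ?_ hg
  · simp
  · intro a b _ _ ha hb
    have : ((a * b : Equiv.Perm Y)) '' U = a '' (b '' U) := by
      rw [Equiv.Perm.coe_mul, Set.image_comp]
    rw [this, hb, ha]
  · intro a _ ha
    have := congrArg (fun S => (a⁻¹ : Equiv.Perm Y) '' S) ha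
    simpa [Set.image_image] using this.symm

/-- The nonempty integere sets of the common invariant topology of Ξ are exactly
the orbits of the subgroup generated by Ξ. -/
theorem integere_iff_orbit {Y : Type*} (Ξ : Set (Equiv.Perm Y)) (χ : Set Y)
    (hne : χ.Nonempty) :
    χ = ⋂₀ {U : Set Y | (∀ ξ ∈ Ξ, ξ '' U = U) ∧ (U ∩ χ).Nonempty} ↔
      ∃ x : Y, χ = MulAction.orbit (Subgroup.closure Ξ) x := by
  set G := Subgroup.closure Ξ with hG
  have orbit_inv : ∀ (x : Y) (ξ : Equiv.Perm Y), ξ ∈ Ξ →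
      ξ '' MulAction.orbit G x = MulAction.orbit G x := by
    intro x ξ hξ
    have hξG : ξ ∈ G := Subgroup.subset_closure hξ
    ext y
    simp only [Set.mem_image, MulAction.mem_orbit_iff]
    constructor
    · rintro ⟨z, ⟨g, rfl⟩, rfl⟩
      exact ⟨⟨ξ, hξG⟩ * g, rfl⟩
    · rintro ⟨g, rfl⟩
      refine ⟨(⟨ξ, hξG⟩⁻¹ * g : G) • x, ⟨_, rfl⟩, ?_⟩
      show ξ ((((⟨ξ, hξG⟩⁻¹ * g : G) : Equiv.Perm Y)) x) = (g : Equiv.Perm Y) x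
      simp [Equiv.Perm.mul_apply]
  have mem_smul : ∀ (U : Set Y), (∀ ξ ∈ Ξ, ξ '' U = U) → ∀ (g : G) (y : Y),
      y ∈ U → g • y ∈ U := by
    intro U hU g y hy
    have := closure_image_eq hU g g.2
    rw [← this]
    exact ⟨y, hy, rfl⟩
  constructor
  · rintro h
    obtain ⟨x, hx⟩ := hne
    refine ⟨x, ?_⟩
    apply subset_antisymm
    · rw [h]
      exact Set.sInter_subset_of_mem ⟨orbit_inv x, x, MulAction.mem_orbit_self x, hx⟩
    · rintro y ⟨g, rfl⟩
      rw [h]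
      intro U hU
      exact mem_smul U hU.1 g x (by rw [h] at hx; exact hx U hU)
  · rintro ⟨x, rfl⟩
    apply subset_antisymm
    · rintro y ⟨g, rfl⟩ U hU
      obtain ⟨z, hzU, h, hzx⟩ := hU.2
      obtain ⟨h, rfl⟩ := hzx
      have hxU : x ∈ U := by
        have := mem_smul U hU.1 h⁻¹ _ hzU
        simpa using this
      exact mem_smul U hU.1 g x hxU
    · exact Set.sInter_subset_of_mem ⟨orbit_inv x, ⟨x, MulAction.mem_orbit_self x, MulAction.mem_orbit_self x⟩⟩
end

section
/- Let φ : ℝ → Y → Y be a flow on a type Y (φ 0 = id and φ (s + t) = φ s ∘ φ t for all s, t), and let χ ⊆ Y be nonempty and flow-invariant (φ t '' χ = χ for all t). Then the following are equivalent: (i) for all nonempty subsets A, B ⊆ χ there exists t : ℝ with (φ t '' A) ∩ B nonempty; (ii) χ is a single trajectory, i.e., there exists x ∈ Y with χ = {φ t x | t : ℝ}. -/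
/-- For a flow, a nonempty flow-invariant set satisfies the (free-attractor)
coherence condition relative to the full power set iff it is a single
trajectory. -/
theorem coherent_iff_trajectory {Y : Type*} (φ : ℝ → Y → Y)
    (h0 : φ 0 = id) (hadd : ∀ s t : ℝ, φ (s + t) = φ s ∘ φ t)
    (χ : Set Y) (hne : χ.Nonempty) (hinv : ∀ t : ℝ, φ t '' χ = χ) :
    (∀ A B : Set Y, A ⊆ χ → B ⊆ χ → A.Nonempty → B.Nonempty →
        ∃ t : ℝ, ((φ t '' A) ∩ B).Nonempty) ↔
      ∃ x : Y, χ = {y | ∃ t : ℝ, φ t x = y} := by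
  constructor
  · intro h
    obtain ⟨x, hx⟩ := hne
    refine ⟨x, Set.Subset.antisymm ?_ ?_⟩
    · intro y hy
      obtain ⟨t, z, hz⟩ := h {x} {y} (by simpa using hx) (by simpa using hy)
        ⟨x, rfl⟩ ⟨y, rfl⟩
      simp at hz
      exact ⟨t, hz.1 ▸ hz.2⟩
    · rintro y ⟨t, rfl⟩
      rw [← hinv t]
      exact ⟨x, hx, rfl⟩
  · rintro ⟨x, rfl⟩ A B hA hB ⟨a, ha⟩ ⟨b, hb⟩
    obtain ⟨s, rfl⟩ := hA ha
    obtain ⟨u, rfl⟩ := hB hb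
    refine ⟨u - s, φ u x, ⟨φ s x, ha, ?_⟩, hb⟩
    have := congrFun (hadd (u - s) s) x
    simpa [sub_add_cancel] using this.symm
end

section
/- Let φ : ℝ → Y → Y be a flow on a type Y (φ 0 = id, φ (s + t) = φ s ∘ φ t), let 𝒜 be a family of subsets of Y covering Y (⋃₀ 𝒜 = Set.univ), and let cl_𝒜(X) = ⋂₀ {C : Set Y | Cᶜ ∈ 𝒜 ∧ X ⊆ C}. Assume every flow map commutes with the hull operator: φ t '' cl_𝒜(X) = cl_𝒜(φ t '' X) for all t : ℝ and X ⊆ Y. Then for every x ∈ Y, writing χ = cl_𝒜({φ t x | t : ℝ}) for the hull of the trajectory of x: (a) χ is flow-invariant, φ t '' χ = χ for all t; and (b) for all A, B ∈ 𝒜 with A ∩ χ nonempty and B ∩ χ nonempty, there exists t : ℝ such that (φ t '' (A ∩ χ)) ∩ (B ∩ χ) is nonempty. -/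
/-- The hull operator of a set system 𝒜 over Y. -/
def clA {Y : Type*} (𝒜 : Set (Set Y)) (X : Set Y) : Set Y :=
  ⋂₀ {C : Set Y | Cᶜ ∈ 𝒜 ∧ X ⊆ C}

/-- Satz 3.3 (verallgemeinerter insensitiver Ergodensatz): if all flow maps
commute with the hull operator of a covering set system 𝒜, then every hull of a
trajectory is flow-invariant and satisfies the coherence condition relative
to 𝒜. -/
theorem generalized_insensitive_ergodic {Y : Type*} (φ : ℝ → Y → Y)
    (h0 : φ 0 = id) (hadd : ∀ s t : ℝ, φ (s + t) = φ s ∘ φ t)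
    (𝒜 : Set (Set Y)) (hcov : ⋃₀ 𝒜 = Set.univ)
    (hcomm : ∀ (t : ℝ) (X : Set Y), φ t '' clA 𝒜 X = clA 𝒜 (φ t '' X))
    (x : Y) :
    (∀ t : ℝ, φ t '' clA 𝒜 {y | ∃ s : ℝ, φ s x = y} =
        clA 𝒜 {y | ∃ s : ℝ, φ s x = y}) ∧
      (∀ A ∈ 𝒜, ∀ B ∈ 𝒜,
        (A ∩ clA 𝒜 {y | ∃ s : ℝ, φ s x = y}).Nonempty →
        (B ∩ clA 𝒜 {y | ∃ s : ℝ, φ s x = y}).Nonempty →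
        ∃ t : ℝ, ((φ t '' (A ∩ clA 𝒜 {y | ∃ s : ℝ, φ s x = y})) ∩
          (B ∩ clA 𝒜 {y | ∃ s : ℝ, φ s x = y})).Nonempty) := by
  set T : Set Y := {y | ∃ s : ℝ, φ s x = y} with hT
  -- the trajectory is contained in its hull
  have hTsub : T ⊆ clA 𝒜 T := fun y hy C hC => hC.2 hy
  -- the trajectory is flow-invariant
  have hinv : ∀ t : ℝ, φ t '' T = T := by
    intro t
    ext y
    constructor
    · rintro ⟨z, ⟨s, rfl⟩, rfl⟩
      exact ⟨t + s, by rw [hadd]; rfl⟩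
    · rintro ⟨s, rfl⟩
      refine ⟨φ (s - t) x, ⟨s - t, rfl⟩, ?_⟩
      have : φ t (φ (s - t) x) = φ (t + (s - t)) x := by rw [hadd]; rfl
      rw [this]; ring_nf
  constructor
  · intro t
    rw [hcomm, hinv]
  · intro A hA B hB hAne hBne
    -- A meets the trajectory itself
    have hmeet : ∀ C ∈ 𝒜, (C ∩ clA 𝒜 T).Nonempty → ∃ s : ℝ, φ s x ∈ C := by
      intro C hC hne
      by_contra h
      push_neg at h
      have hTC : T ⊆ Cᶜ := by rintro y ⟨s, rfl⟩; exact h s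
      obtain ⟨y, hyC, hycl⟩ := hne
      have : y ∈ Cᶜ := hycl Cᶜ ⟨by simpa using hC, hTC⟩
      exact this hyC
    obtain ⟨s, hs⟩ := hmeet A hA hAne
    obtain ⟨r, hr⟩ := hmeet B hB hBne
    refine ⟨r - s, φ r x, ⟨φ s x, ⟨hs, hTsub ⟨s, rfl⟩⟩, ?_⟩, hr, hTsub ⟨r, rfl⟩⟩
    have : φ (r - s) (φ s x) = φ (r - s + s) x := by rw [hadd]; rfl
    rw [this]; ring_nf
end

section
/- Let X be a compact topological space, let Φ : X × ℝ → X be jointly continuous, and let χ ⊆ X be a closed set that is invariant under all flow maps: (fun x => Φ (x, t)) '' χ = χ for every t : ℝ. Then the following are equivalent: (i) for all open sets U, V with (U ∩ χ) and (V ∩ χ) nonempty, there exists t : ℝ such that ((fun x => Φ (x, t)) '' (U ∩ χ)) ∩ (V ∩ χ) is nonempty; (ii) for all such U, V there exists a strictly increasing sequence u : ℕ → ℝ such that for every n, ((fun x => Φ (x, u n)) '' (U ∩ χ)) ∩ (V ∩ χ) is nonempty; (iii) for all such U, V there exists a strictly decreasing sequence u : ℕ → ℝ with the same property. -/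
/-- If one time works, a whole ε-ball of times works. -/
lemma coherence_ball {X : Type*} [TopologicalSpace X]
    (Φ : X × ℝ → X) (hΦ : Continuous Φ) (χ : Set X)
    (hinv : ∀ t : ℝ, (fun x => Φ (x, t)) '' χ = χ)
    {U V : Set X} (hV : IsOpen V)
    {t : ℝ} (h : (((fun x => Φ (x, t)) '' (U ∩ χ)) ∩ (V ∩ χ)).Nonempty) :
    ∃ ε > 0, ∀ s : ℝ, |s - t| < ε →
      (((fun x => Φ (x, s)) '' (U ∩ χ)) ∩ (V ∩ χ)).Nonempty := by
  obtain ⟨y, ⟨x, hxU, rfl⟩, hyV, _⟩ := h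
  have hf : Continuous fun s : ℝ => Φ (x, s) :=
    hΦ.comp (continuous_const.prodMk continuous_id)
  have hO : IsOpen ((fun s : ℝ => Φ (x, s)) ⁻¹' V) := hV.preimage hf
  obtain ⟨ε, hε, hball⟩ := Metric.isOpen_iff.mp hO t hyV
  refine ⟨ε, hε, fun s hs => ?_⟩
  have hsV : Φ (x, s) ∈ V := hball (by simpa [Real.dist_eq] using hs)
  have hsχ : Φ (x, s) ∈ χ := by
    rw [← hinv s]; exact ⟨x, hxU.2, rfl⟩
  exact ⟨Φ (x, s), ⟨x, hxU, rfl⟩, hsV, hsχ⟩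

/-- Bemerkung 2.3 (Diversität der Kohärenzkriterien): for a jointly continuous
flow function on a compact space and a closed flow-invariant set χ, the
ordinary, monotone increasing and monotone decreasing coherence criteria are
equivalent. -/
theorem coherence_criteria_equivalent {X : Type*} [TopologicalSpace X]
    [CompactSpace X] (Φ : X × ℝ → X) (hΦ : Continuous Φ)
    (χ : Set X) (hcl : IsClosed χ)
    (hinv : ∀ t : ℝ, (fun x => Φ (x, t)) '' χ = χ) :
    ((∀ U V : Set X, IsOpen U → IsOpen V → (U ∩ χ).Nonempty → (V ∩ χ).Nonempty →
        ∃ t : ℝ, (((fun x => Φ (x, t)) '' (U ∩ χ)) ∩ (V ∩ χ)).Nonempty) ↔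
      (∀ U V : Set X, IsOpen U → IsOpen V → (U ∩ χ).Nonempty → (V ∩ χ).Nonempty →
        ∃ u : ℕ → ℝ, StrictMono u ∧ ∀ n : ℕ,
          (((fun x => Φ (x, u n)) '' (U ∩ χ)) ∩ (V ∩ χ)).Nonempty)) ∧
    ((∀ U V : Set X, IsOpen U → IsOpen V → (U ∩ χ).Nonempty → (V ∩ χ).Nonempty →
        ∃ t : ℝ, (((fun x => Φ (x, t)) '' (U ∩ χ)) ∩ (V ∩ χ)).Nonempty) ↔
      (∀ U V : Set X, IsOpen U → IsOpen V → (U ∩ χ).Nonempty → (V ∩ χ).Nonempty →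
        ∃ u : ℕ → ℝ, StrictAnti u ∧ ∀ n : ℕ,
          (((fun x => Φ (x, u n)) '' (U ∩ χ)) ∩ (V ∩ χ)).Nonempty)) := by
  have hdiv : ∀ ε : ℝ, 0 < ε → StrictAnti fun n : ℕ => ε / (n + 2) := by
    intro ε hε m n hmn
    apply div_lt_div_of_pos_left hε (by positivity)
    have : (m : ℝ) < n := by exact_mod_cast hmn
    linarith
  have hlt : ∀ (ε : ℝ) (n : ℕ), 0 < ε → 0 < ε / (n + 2) ∧ ε / (n + 2) < ε := by
    intro ε n hε
    constructor
    · positivity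
    · apply div_lt_self hε; push_cast; linarith [Nat.cast_nonneg (α := ℝ) n]
  constructor
  · constructor
    · intro h U V hU hV hUne hVne
      obtain ⟨t, ht⟩ := h U V hU hV hUne hVne
      obtain ⟨ε, hε, hball⟩ := coherence_ball Φ hΦ χ hinv hV ht
      refine ⟨fun n => t + ε - ε / (n + 2), fun m n hmn => by
        have := hdiv ε hε hmn; dsimp at this ⊢; linarith, fun n => ?_⟩
      apply hball
      obtain ⟨h1, h2⟩ := hlt ε n hε
      rw [abs_lt]; constructor <;> linarith
    · intro h U V hU hV hUne hVne
      obtain ⟨u, _, hu⟩ := h U V hU hV hUne hVne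
      exact ⟨u 0, hu 0⟩
  · constructor
    · intro h U V hU hV hUne hVne
      obtain ⟨t, ht⟩ := h U V hU hV hUne hVne
      obtain ⟨ε, hε, hball⟩ := coherence_ball Φ hΦ χ hinv hV ht
      refine ⟨fun n => t - ε + ε / (n + 2), fun m n hmn => by
        have := hdiv ε hε hmn; dsimp at this ⊢; linarith, fun n => ?_⟩
      apply hball
      obtain ⟨h1, h2⟩ := hlt ε n hε
      rw [abs_lt]; constructor <;> linarith
    · intro h U V hU hV hUne hVne
      obtain ⟨u, _, hu⟩ := h U V hU hV hUne hVne
      exact ⟨u 0, hu 0⟩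
end

section
/- Let 𝒜 be a family of subsets of a type Y and let f : Y → Y be bijective. Then f is Cantor-continuous with respect to 𝒜 if and only if f maps every 𝒜-free set to an 𝒜-free set, i.e., whenever X ⊆ Y contains no nonempty member of 𝒜 as a subset, then f '' X also contains no nonempty member of 𝒜 as a subset. -/
/-- f is Cantor-continuous with respect to 𝒜. -/
def CantorCont {Y : Type*} (𝒜 : Set (Set Y)) (f : Y → Y) : Prop :=
  ∀ A ∈ 𝒜, A.Nonempty → ∃ B ∈ 𝒜, B.Nonempty ∧ f '' B ⊆ A

/-- A bijection is Cantor-continuous with respect to 𝒜 iff it maps every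
𝒜-free set (containing no nonempty member of 𝒜) to an 𝒜-free set. -/
theorem cantorCont_iff_preserves_free {Y : Type*} (𝒜 : Set (Set Y))
    (f : Y → Y) (hf : Function.Bijective f) :
    CantorCont 𝒜 f ↔
      ∀ X : Set Y, (∀ A ∈ 𝒜, A.Nonempty → ¬ A ⊆ X) →
        (∀ A ∈ 𝒜, A.Nonempty → ¬ A ⊆ f '' X) := by
  constructor
  · intro hc X hX A hA hAne hsub
    obtain ⟨B, hB, hBne, hfB⟩ := hc A hA hAne
    apply hX B hB hBne
    intro b hb
    have : f b ∈ f '' X := hsub (hfB ⟨b, hb, rfl⟩)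
    obtain ⟨x, hx, hfx⟩ := this
    rwa [hf.injective hfx] at hx
  · intro h A hA hAne
    by_contra hno
    push_neg at hno
    have hfree : ∀ B ∈ 𝒜, B.Nonempty → ¬ B ⊆ f ⁻¹' A := by
      intro B hB hBne hBsub
      exact hno B hB hBne (fun y ⟨b, hb, hfb⟩ => hfb ▸ hBsub hb)
    have := h (f ⁻¹' A) hfree A hA hAne
    exact this (by rw [Set.image_preimage_eq A hf.surjective])
end

section
/- Let 𝒜 be a family of subsets of a type Y and let S be a set of bijections of Y that is closed under taking inverses (for example, the underlying set of a subgroup of the permutation group of Y, such as a phase flow group). Then every element of S is Cantor-continuous with respect to 𝒜 if and only if every element of S is conversely Cantor-continuous with respect to 𝒜. -/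
/-- f is conversely Cantor-continuous with respect to 𝒜. -/
def ConvCantorCont {Y : Type*} (𝒜 : Set (Set Y)) (f : Y → Y) : Prop :=
  ∀ A ∈ 𝒜, A.Nonempty → ∃ B ∈ 𝒜, B.Nonempty ∧ B ⊆ f '' A

/-- (Korollar 3.9, provable core.) For a set of bijections closed under
inverses, collective Cantor-continuity is equivalent to collective converse
Cantor-continuity. -/
theorem collective_cantorCont_iff_convCantorCont {Y : Type*}
    (𝒜 : Set (Set Y)) (S : Set (Equiv.Perm Y))
    (hS : ∀ e ∈ S, e⁻¹ ∈ S) :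
    (∀ e ∈ S, CantorCont 𝒜 ⇑e) ↔ (∀ e ∈ S, ConvCantorCont 𝒜 ⇑e) := by
  have key : ∀ (e : Equiv.Perm Y) (A B : Set Y), ⇑e '' B ⊆ A ↔ B ⊆ ⇑e⁻¹ '' A := by
    intro e A B
    rw [Set.image_subset_iff]
    congr! 1
    ext x
    simp [Equiv.Perm.inv_def, Equiv.image_eq_preimage_symm]
  constructor
  · intro h e he A hA hAne
    obtain ⟨B, hB, hBne, hsub⟩ := h e⁻¹ (hS e he) A hA hAne
    exact ⟨B, hB, hBne, by simpa using (key e⁻¹ A B).mp hsub⟩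
  · intro h e he A hA hAne
    obtain ⟨B, hB, hBne, hsub⟩ := h e⁻¹ (hS e he) A hA hAne
    refine ⟨B, hB, hBne, (key e A B).mpr ?_⟩
    simpa using hsub
end

section
/- Let Y be a finite type, 𝒜 a family of subsets of Y, and f : Y → Y a bijection. Then f is Cantor-continuous with respect to 𝒜 if and only if f is conversely Cantor-continuous with respect to 𝒜. (Equivalently: on a finite state space, the sets of Cantor-continuous and of conversely Cantor-continuous bijections coincide.) -/
private lemma cc_iter {Y : Type*} (𝒜 : Set (Set Y)) (f : Y → Y)
    (h : CantorCont 𝒜 f) : ∀ m, CantorCont 𝒜 (f^[m]) := by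
  intro m
  induction m with
  | zero => intro A hA hne; exact ⟨A, hA, hne, by simp⟩
  | succ k ih =>
    intro A hA hne
    obtain ⟨B, hB, hBne, hBsub⟩ := h A hA hne
    obtain ⟨C, hC, hCne, hCsub⟩ := ih B hB hBne
    refine ⟨C, hC, hCne, ?_⟩
    rw [Function.iterate_succ']
    rintro _ ⟨c, hc, rfl⟩
    exact hBsub ⟨f^[k] c, hCsub ⟨c, hc, rfl⟩, rfl⟩

private lemma conv_iter {Y : Type*} (𝒜 : Set (Set Y)) (f : Y → Y)
    (h : ConvCantorCont 𝒜 f) : ∀ m, ConvCantorCont 𝒜 (f^[m]) := by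
  intro m
  induction m with
  | zero => intro A hA hne; exact ⟨A, hA, hne, by simp⟩
  | succ k ih =>
    intro A hA hne
    obtain ⟨B, hB, hBne, hBsub⟩ := h A hA hne
    obtain ⟨C, hC, hCne, hCsub⟩ := ih B hB hBne
    refine ⟨C, hC, hCne, ?_⟩
    rw [Function.iterate_succ]
    intro c hc
    obtain ⟨b, hb, rfl⟩ := hCsub hc
    obtain ⟨a, ha, rfl⟩ := hBsub hb
    exact ⟨a, ha, rfl⟩

/-- Bemerkung 3.10 (C₊-C₋-Koinzidenz im endlichen Zustandsraum): on a finite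
type, a bijection is Cantor-continuous iff it is conversely Cantor-continuous. -/
theorem cantorCont_iff_convCantorCont_of_finite {Y : Type*} [Finite Y]
    (𝒜 : Set (Set Y)) (f : Y → Y) (hf : Function.Bijective f) :
    CantorCont 𝒜 f ↔ ConvCantorCont 𝒜 f := by
  set e : Equiv.Perm Y := Equiv.ofBijective f hf with he
  have hcoe : ⇑e = f := rfl
  obtain ⟨m, hm⟩ : ∃ m, orderOf e = m + 1 :=
    ⟨orderOf e - 1, (Nat.succ_pred_eq_of_pos (orderOf_pos e)).symm⟩
  have hpow : e ^ (m + 1) = 1 := by rw [← hm]; exact pow_orderOf_eq_one e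
  have hiter : ∀ x, f^[m + 1] x = x := by
    intro x
    have := congrArg (fun g => g x) (congrArg (fun (p : Equiv.Perm Y) => ⇑p) hpow)
    simpa [Equiv.Perm.coe_pow, hcoe] using this
  constructor
  · intro h A hA hne
    obtain ⟨B, hB, hBne, hBsub⟩ := cc_iter 𝒜 f h m A hA hne
    refine ⟨B, hB, hBne, fun b hb => ?_⟩
    have hmem : f^[m] b ∈ A := hBsub ⟨b, hb, rfl⟩
    refine ⟨f^[m] b, hmem, ?_⟩
    have : f (f^[m] b) = f^[m + 1] b := (Function.iterate_succ_apply' f m b).symm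
    rw [this, hiter b]
  · intro h A hA hne
    obtain ⟨B, hB, hBne, hBsub⟩ := conv_iter 𝒜 f h m A hA hne
    refine ⟨B, hB, hBne, ?_⟩
    rintro _ ⟨b, hb, rfl⟩
    obtain ⟨a, ha, rfl⟩ := hBsub hb
    have : f (f^[m] a) = f^[m + 1] a := (Function.iterate_succ_apply' f m a).symm
    rw [this, hiter a]
    exact ha
end
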